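/- arXiv:1612.08938 — 3 statements merged into one kernel-verified Lean document; each statement's English description precedes it below -/
import Mathlib

section
/- Let ω = (1/4)·[[1,0,0,1],[0,1,1,0],[0,1,1,0],[1,0,0,1]] and let V be the unitary with rows (0,0,1,0), (s,-c,0,0), (c,s,0,0), (0,0,0,-1), where c = cos θ and s = sin θ. Then the partial transpose (with respect to the second qubit) of VωV† is positive semidefinite for all θ. -/
open Matrix

/-- Recombine two indices of `Fin 4` (viewed as two-bit strings `i = (a,b)`,
`j = (c,d)`) into the index `(a,d)`. -/
def mixIdx (i j : Fin 4) : Fin 4 := ⟨2 * (i.val / 2) + j.val % 2, by omega⟩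

/-- Partial transpose with respect to the second qubit of a 4×4 matrix viewed as a
2⊗2 bipartite operator: `(M^Γ)_{(a,b),(c,d)} = M_{(a,d),(c,b)}`. -/
def ptB (M : Matrix (Fin 4) (Fin 4) ℝ) : Matrix (Fin 4) (Fin 4) ℝ :=
  Matrix.of fun i j => M (mixIdx i j) (mixIdx j i)

/-- The state ω of Example 1. -/
noncomputable def omegaMat : Matrix (Fin 4) (Fin 4) ℝ :=
  (1 / 4 : ℝ) • !![1, 0, 0, 1; 0, 1, 1, 0; 0, 1, 1, 0; 1, 0, 0, 1]

/-- The unitary V of Example 1, with c = cos θ and s = sin θ. -/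
noncomputable def Vmat (θ : ℝ) : Matrix (Fin 4) (Fin 4) ℝ :=
  !![0, 0, 1, 0;
     Real.sin θ, -Real.cos θ, 0, 0;
     Real.cos θ, Real.sin θ, 0, 0;
     0, 0, 0, -1]


lemma ptB_eq (M : Matrix (Fin 4) (Fin 4) ℝ) :
    ptB M = !![M 0 0, M 1 0, M 0 2, M 1 2;
               M 0 1, M 1 1, M 0 3, M 1 3;
               M 2 0, M 3 0, M 2 2, M 3 2;
               M 2 1, M 3 1, M 2 3, M 3 3] := by
  ext i j
  fin_cases i <;> fin_cases j <;> rfl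

set_option maxHeartbeats 2000000 in
lemma VmatH (θ : ℝ) : (Vmat θ)ᴴ =
    !![0, Real.sin θ, Real.cos θ, 0;
       0, -Real.cos θ, Real.sin θ, 0;
       1, 0, 0, 0;
       0, 0, 0, -1] := by
  ext i j
  fin_cases i <;> fin_cases j <;> simp [Vmat, vecHead, vecTail]

set_option maxHeartbeats 2000000 in
lemma ptB_V_omega_V_eq (θ : ℝ) : ptB (Vmat θ * omegaMat * (Vmat θ)ᴴ) =
    (1/4 : ℝ) • !![1, -Real.cos θ, Real.sin θ, 0;
                   -Real.cos θ, 1, 0, -Real.sin θ;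
                   Real.sin θ, 0, 1, -Real.cos θ;
                   0, -Real.sin θ, -Real.cos θ, 1] := by
  have h := Real.sin_sq_add_cos_sq θ
  rw [VmatH, ptB_eq]
  ext i j
  fin_cases i <;> fin_cases j <;>
    (simp [Vmat, omegaMat, mul_apply, Fin.sum_univ_four, vecHead, vecTail] <;> nlinarith [h])

/-- the partial transpose (w.r.t. the second qubit) of VωV† is positive
semidefinite for all θ. -/
theorem ptB_V_omega_V_posSemidef (θ : ℝ) :
    (ptB (Vmat θ * omegaMat * (Vmat θ)ᴴ)).PosSemidef := by
  rw [ptB_V_omega_V_eq θ]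
  set c := Real.cos θ
  set s := Real.sin θ
  have h : s ^ 2 + c ^ 2 = 1 := Real.sin_sq_add_cos_sq θ
  rw [posSemidef_iff_dotProduct_mulVec]
  constructor
  · ext i j
    fin_cases i <;> fin_cases j <;> simp
  · intro x
    have e0 := sq_nonneg (x 0 - c * x 1 + s * x 2)
    have e1 := sq_nonneg (-(c * x 0) + x 1 - s * x 3)
    have e2 := sq_nonneg (s * x 0 + x 2 - c * x 3)
    have e3 := sq_nonneg (-(s * x 1) - c * x 2 + x 3)
    simp [mulVec, dotProduct, Fin.sum_univ_four]
    nlinarith [e0, e1, e2, e3, h, sq_nonneg (x 0), sq_nonneg (x 1), sq_nonneg (x 2), sq_nonneg (x 3)]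
end

section
/- Let ω̃ = (1/2)·diag(1,0,0,1) and let V be the unitary with rows (0,0,1,0), (s,-c,0,0), (c,s,0,0), (0,0,0,-1) for c = cos θ, s = sin θ with sin θ·cos θ ≠ 0. Then the partial transpose of Vω̃V† (with respect to the second qubit) is not positive semidefinite. -/
open Matrix

/-- The separable state ω̃ = (1/2)·diag(1,0,0,1). -/
noncomputable def omegaTilde : Matrix (Fin 4) (Fin 4) ℝ :=
  (1 / 2 : ℝ) • !![1, 0, 0, 0; 0, 0, 0, 0; 0, 0, 0, 0; 0, 0, 0, 1]

set_option maxHeartbeats 2000000 in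
/-- if sin θ · cos θ ≠ 0 then the partial transpose (w.r.t. the second
qubit) of Vω̃V† is not positive semidefinite, i.e. V is a nonlocal unitary. -/
theorem ptB_V_omegaTilde_V_not_posSemidef (θ : ℝ) (h : Real.sin θ * Real.cos θ ≠ 0) :
    ¬ (ptB (Vmat θ * omegaTilde * (Vmat θ)ᴴ)).PosSemidef := by
  set s := Real.sin θ
  set c := Real.cos θ
  have key : ptB (Vmat θ * omegaTilde * (Vmat θ)ᴴ) =
      !![0, 0, 0, s * c / 2;
         0, s ^ 2 / 2, 0, 0;
         0, 0, c ^ 2 / 2, 0;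
         s * c / 2, 0, 0, 1 / 2] := by
    ext i j
    fin_cases i <;> fin_cases j <;>
      simp [ptB, Vmat, omegaTilde, Matrix.mul_apply, Fin.sum_univ_four,
        show mixIdx 0 0 = 0 from rfl, show mixIdx 0 1 = 1 from rfl,
        show mixIdx 0 2 = 0 from rfl, show mixIdx 0 3 = 1 from rfl,
        show mixIdx 1 0 = 0 from rfl, show mixIdx 1 1 = 1 from rfl,
        show mixIdx 1 2 = 0 from rfl, show mixIdx 1 3 = 1 from rfl,
        show mixIdx 2 0 = 2 from rfl, show mixIdx 2 1 = 3 from rfl,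
        show mixIdx 2 2 = 2 from rfl, show mixIdx 2 3 = 3 from rfl,
        show mixIdx 3 0 = 2 from rfl, show mixIdx 3 1 = 3 from rfl,
        show mixIdx 3 2 = 2 from rfl, show mixIdx 3 3 = 3 from rfl,
        Matrix.vecHead, Matrix.vecTail, Matrix.transpose_apply, Function.comp] <;> ring
  intro hp
  have hx := hp.dotProduct_mulVec_nonneg ![-1 / (s * c), 0, 0, 1]
  rw [key] at hx
  simp [dotProduct, mulVec, Fin.sum_univ_four] at hx
  field_simp at hx
  rw [div_self h] at hx
  linarith
end

section
/- For density matrices ρ₁, ρ₂ on ℂᵈ with ‖ρ₁ − ρ₂‖₁ = ε ≤ 1/e, the Fannes-type inequality |S(ρ₁) − S(ρ₂)| ≤ ε·log₂ d + η(ε) holds, where S is von Neumann entropy and η(x) = −x·log₂ x. -/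
open Matrix
open scoped ComplexOrder

/-- The trace norm ‖X‖₁ = Tr √(X†X) of a complex matrix. -/
noncomputable def traceNorm {m : Type*} [Fintype m] [DecidableEq m]
    (X : Matrix m m ℂ) : ℝ :=
  (((Matrix.posSemidef_conjTranspose_mul_self X).1.eigenvectorUnitary : Matrix m m ℂ) *
      diagonal (((↑) : ℝ → ℂ) ∘ (√·) ∘ (Matrix.posSemidef_conjTranspose_mul_self X).1.eigenvalues) *
      (star (Matrix.posSemidef_conjTranspose_mul_self X).1.eigenvectorUnitary : Matrix m m ℂ)).trace.re

set_option linter.unusedSectionVars false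

section ScalarLemmas
open Real

lemma eta_subadd {s t : ℝ} (hs : 0 ≤ s) (ht : 0 ≤ t) :
    negMulLog (s + t) ≤ negMulLog s + negMulLog t := by
  rcases eq_or_lt_of_le hs with rfl|hs
  · simp
  rcases eq_or_lt_of_le ht with rfl|ht
  · simp
  have h1 : Real.log s ≤ Real.log (s + t) := Real.log_le_log hs (by linarith)
  have h2 : Real.log t ≤ Real.log (s + t) := Real.log_le_log ht (by linarith)
  simp only [negMulLog]
  nlinarith [mul_le_mul_of_nonneg_left h1 hs.le, mul_le_mul_of_nonneg_left h2 ht.le]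

lemma t_le_eta {t : ℝ} (ht : 0 < t) (he : t ≤ (Real.exp 1)⁻¹) : t ≤ negMulLog t := by
  have : Real.log t ≤ -1 := by
    have := Real.log_le_log ht he
    rwa [Real.log_inv, Real.log_exp] at this
  simp only [negMulLog]
  nlinarith

lemma eta_lower {s t : ℝ} (hs : 0 ≤ s) (ht : 0 ≤ t) (h1 : s + t ≤ 1)
    (he : t ≤ (Real.exp 1)⁻¹) :
    negMulLog s - negMulLog (s + t) ≤ negMulLog t := by
  rcases eq_or_lt_of_le ht with rfl|ht
  · simp
  have het : t ≤ negMulLog t := t_le_eta ht he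
  rcases eq_or_lt_of_le hs with rfl|hs
  · simp only [zero_add, negMulLog_zero, zero_sub, neg_le]
    nlinarith
  have hst : 0 < s + t := by linarith
  have key : Real.log (s + t) - Real.log s ≤ t / s := by
    have h3 := Real.log_le_sub_one_of_pos (show 0 < (s + t) / s by positivity)
    rw [Real.log_div hst.ne' hs.ne'] at h3
    have h4 : (s + t) / s - 1 = t / s := by field_simp; ring
    linarith
  have hlog : Real.log (s + t) ≤ 0 := Real.log_nonpos hst.le h1
  simp only [negMulLog]
  have hts : s * (Real.log (s + t) - Real.log s) ≤ t := by
    calc s * (Real.log (s + t) - Real.log s) ≤ s * (t / s) := by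
          exact mul_le_mul_of_nonneg_left key hs.le
      _ = t := by field_simp
  have het' : t ≤ -t * Real.log t := by simpa [negMulLog] using het
  nlinarith [hts, mul_nonpos_of_nonneg_of_nonpos ht.le hlog, het']

lemma eta_mono {x y : ℝ} (hx : 0 ≤ x) (hxy : x ≤ y) (hy : y ≤ (Real.exp 1)⁻¹) :
    negMulLog x ≤ negMulLog y := by
  rcases eq_or_lt_of_le hx with rfl|hx
  · simp only [negMulLog_zero]
    rcases eq_or_lt_of_le hxy with rfl|hy'
    · simp
    have := t_le_eta hy' hy
    linarith
  have hy' : 0 < y := lt_of_lt_of_le hx hxy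
  have hylog : Real.log y ≤ -1 := by
    have := Real.log_le_log hy' hy
    rwa [Real.log_inv, Real.log_exp] at this
  have key : Real.log y - Real.log x ≤ y / x - 1 := by
    have := Real.log_le_sub_one_of_pos (show 0 < y / x by positivity)
    rwa [Real.log_div hy'.ne' hx.ne'] at this
  have key2 : x * (Real.log y - Real.log x) ≤ y - x := by
    calc x * (Real.log y - Real.log x) ≤ x * (y / x - 1) := mul_le_mul_of_nonneg_left key hx.le
      _ = y - x := by field_simp
  have key3 : (y - x) * Real.log y ≤ (y - x) * (-1) :=
    mul_le_mul_of_nonneg_left hylog (by linarith)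
  simp only [negMulLog]
  nlinarith [key2, key3]

lemma eta_sum_le {d : ℕ} (hd : 1 ≤ d) (t : Fin d → ℝ) (ht : ∀ k, 0 ≤ t k) :
    ∑ k, negMulLog (t k) ≤ (∑ k, t k) * Real.log d + negMulLog (∑ k, t k) := by
  set T := ∑ k, t k with hT
  have hT0 : 0 ≤ T := Finset.sum_nonneg fun k _ => ht k
  rcases eq_or_lt_of_le hT0 with h0|h0
  · have : ∀ k ∈ Finset.univ, t k = 0 := by
      intro k _
      exact le_antisymm (by
        have := (Finset.sum_eq_zero_iff_of_nonneg (fun k _ => ht k)).1 h0.symm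
        exact le_of_eq (this k (Finset.mem_univ k))) (ht k)
    rw [← h0]
    simp only [negMulLog_zero, zero_mul, add_zero]
    rw [Finset.sum_congr rfl (fun k hk => by rw [this k hk, negMulLog_zero])]
    simp
  have hd0 : (0:ℝ) < d := by exact_mod_cast Nat.pos_of_ne_zero (by omega)
  have key : ∀ k, negMulLog (t k) ≤ t k * Real.log d - t k * Real.log T + (T / d - t k) := by
    intro k
    rcases eq_or_lt_of_le (ht k) with h|h
    · rw [← h]; simp; positivity
    · have hlog : Real.log (T / (d * t k)) ≤ T / (d * t k) - 1 :=
        Real.log_le_sub_one_of_pos (by positivity)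
      rw [Real.log_div h0.ne' (by positivity), Real.log_mul hd0.ne' h.ne'] at hlog
      have := mul_le_mul_of_nonneg_left hlog h.le
      simp only [negMulLog]
      have heq : t k * (T / (d * t k) - 1) = T / d - t k := by field_simp
      nlinarith [this, heq]
  calc ∑ k, negMulLog (t k) ≤ ∑ k, (t k * Real.log d - t k * Real.log T + (T / d - t k)) :=
        Finset.sum_le_sum fun k _ => key k
    _ = T * Real.log d - T * Real.log T + (d * (T / d) - T) := by
        rw [Finset.sum_add_distrib, Finset.sum_sub_distrib, ← Finset.sum_mul, ← Finset.sum_mul,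
          Finset.sum_sub_distrib, Finset.sum_const, Finset.card_univ, Fintype.card_fin]
        simp [hT, nsmul_eq_mul]
    _ = T * Real.log d + negMulLog T := by
        rw [mul_div_cancel₀ _ hd0.ne']
        simp [negMulLog]; ring

lemma eta_abs_sub' {a b : ℝ} (hb : 0 ≤ b) (ha1 : a ≤ 1) (hab : b ≤ a)
    (he : a - b ≤ (Real.exp 1)⁻¹) :
    |negMulLog a - negMulLog b| ≤ negMulLog (a - b) := by
  rw [abs_sub_le_iff]
  constructor
  · have := eta_subadd hb (sub_nonneg.2 hab)
    rw [add_sub_cancel] at this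
    linarith
  · have := eta_lower hb (sub_nonneg.2 hab) (by linarith) he
    rw [add_sub_cancel] at this
    linarith

lemma eta_abs_sub {a b : ℝ} (ha : 0 ≤ a) (ha1 : a ≤ 1) (hb : 0 ≤ b) (hb1 : b ≤ 1)
    (he : |a - b| ≤ (Real.exp 1)⁻¹) :
    |negMulLog a - negMulLog b| ≤ negMulLog |a - b| := by
  rcases le_total b a with h|h
  · have h' : |a - b| = a - b := abs_of_nonneg (by linarith)
    rw [h'] at he ⊢
    exact eta_abs_sub' hb ha1 h he
  · have h' : |a - b| = b - a := by rw [abs_sub_comm]; exact abs_of_nonneg (by linarith)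
    rw [h'] at he ⊢
    rw [abs_sub_comm]
    exact eta_abs_sub' ha hb1 h he

end ScalarLemmas

section MatrixLemmas
open scoped InnerProductSpace

variable {n : Type*} [Fintype n] [DecidableEq n]

lemma trace_conj_diag (U : Matrix.unitaryGroup n ℂ) (f : n → ℂ) :
    ((U : Matrix n n ℂ) * Matrix.diagonal f * star (U : Matrix n n ℂ)).trace = ∑ i, f i := by
  rw [Matrix.trace_mul_cycle, Unitary.coe_star_mul_self U, Matrix.one_mul,
    Matrix.trace_diagonal]

lemma IsHermitian.trace_eq' {A : Matrix n n ℂ} (hA : A.IsHermitian) :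
    A.trace = ∑ i, (hA.eigenvalues i : ℂ) := by
  conv_lhs => rw [hA.spectral_theorem, Unitary.conjStarAlgAut_apply]
  rw [trace_conj_diag]
  simp [Function.comp]

lemma conj_diag_mul (U : Matrix.unitaryGroup n ℂ) (f g : n → ℂ) :
    ((U : Matrix n n ℂ) * Matrix.diagonal f * star (U : Matrix n n ℂ)) *
      ((U : Matrix n n ℂ) * Matrix.diagonal g * star (U : Matrix n n ℂ)) =
      (U : Matrix n n ℂ) * Matrix.diagonal (fun i => f i * g i) * star (U : Matrix n n ℂ) := by
  have hU : (star (U : Matrix n n ℂ)) * (U : Matrix n n ℂ) = 1 := Unitary.coe_star_mul_self U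
  calc ((U : Matrix n n ℂ) * Matrix.diagonal f * star (U : Matrix n n ℂ)) *
      ((U : Matrix n n ℂ) * Matrix.diagonal g * star (U : Matrix n n ℂ))
      = (U : Matrix n n ℂ) * Matrix.diagonal f *
        ((star (U : Matrix n n ℂ) * (U : Matrix n n ℂ)) *
          (Matrix.diagonal g * star (U : Matrix n n ℂ))) := by
        simp only [Matrix.mul_assoc]
    _ = (U : Matrix n n ℂ) * (Matrix.diagonal f * Matrix.diagonal g) * star (U : Matrix n n ℂ) := by
        rw [hU, Matrix.one_mul]; simp only [Matrix.mul_assoc]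
    _ = (U : Matrix n n ℂ) * Matrix.diagonal (fun i => f i * g i) * star (U : Matrix n n ℂ) := by
        rw [Matrix.diagonal_mul_diagonal]

lemma psd_conj_diag (U : Matrix.unitaryGroup n ℂ) (f : n → ℝ) (hf : ∀ i, 0 ≤ f i) :
    ((U : Matrix n n ℂ) * Matrix.diagonal (fun i => (f i : ℂ)) * star (U : Matrix n n ℂ)).PosSemidef := by
  have h1 : (Matrix.diagonal (fun i => (f i : ℂ))).PosSemidef :=
    Matrix.PosSemidef.diagonal (fun i => by
      simpa using Complex.zero_le_real.2 (hf i))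
  have := h1.mul_mul_conjTranspose_same (U : Matrix n n ℂ)
  rwa [← Matrix.star_eq_conjTranspose] at this

lemma traceNorm_eq_sum_abs {A : Matrix n n ℂ} (hA : A.IsHermitian) :
    traceNorm A = ∑ i, |hA.eigenvalues i| := by
  have hB := (Matrix.posSemidef_conjTranspose_mul_self A).1
  have key : traceNorm A = (hB.cfc Real.sqrt).trace.re := by
    rw [IsHermitian.cfc, Unitary.conjStarAlgAut_apply]; rfl
  have hAA : Aᴴ * A = cfc (fun x : ℝ => x * x) A := by
    rw [cfc_mul (fun x : ℝ => x) (fun x : ℝ => x) A, cfc_id' ℝ A, hA.eq]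
  have hc : hB.cfc Real.sqrt = hA.cfc (fun x => |x|) := by
    rw [← hB.cfc_eq, ← hA.cfc_eq]
    simp_rw [hAA]
    rw [← cfc_comp Real.sqrt (fun x : ℝ => x * x) A]
    exact cfc_congr (fun x _ => Real.sqrt_mul_self_eq_abs x)
  rw [key, hc, IsHermitian.cfc, Unitary.conjStarAlgAut_apply, trace_conj_diag, Complex.re_sum]
  simp

variable {n : Type*} [Fintype n] [DecidableEq n]

lemma repr_toEuclideanLin {A : Matrix n n ℂ} (hA : A.IsHermitian)
    (x : EuclideanSpace ℂ n) (i : n) :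
    hA.eigenvectorBasis.repr (Matrix.toEuclideanLin A x) i =
      (hA.eigenvalues i : ℂ) * hA.eigenvectorBasis.repr x i := by
  have hb : Matrix.toEuclideanLin A (hA.eigenvectorBasis i) =
      (hA.eigenvalues i : ℂ) • hA.eigenvectorBasis i := by
    rw [Matrix.toEuclideanLin_apply]
    rw [hA.mulVec_eigenvectorBasis, RCLike.real_smul_eq_coe_smul (K := ℂ), WithLp.toLp_smul,
      WithLp.toLp_ofLp]
    rfl
  rw [OrthonormalBasis.repr_apply_apply, OrthonormalBasis.repr_apply_apply,
    ← (Matrix.isHermitian_iff_isSymmetric.1 hA) (hA.eigenvectorBasis i) x, hb,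
    inner_smul_left]
  simp [Complex.conj_ofReal]

lemma quad_eq {A : Matrix n n ℂ} (hA : A.IsHermitian) (x : EuclideanSpace ℂ n) :
    Complex.re (dotProduct (star ((WithLp.equiv 2 (n → ℂ)) x))
      (A *ᵥ (WithLp.equiv 2 (n → ℂ)) x)) =
      ∑ i, hA.eigenvalues i * ‖hA.eigenvectorBasis.repr x i‖^2 := by
  have h1 : dotProduct (star ((WithLp.equiv 2 (n → ℂ)) x))
      ((A *ᵥ (WithLp.equiv 2 (n → ℂ)) x)) = ⟪x, Matrix.toEuclideanLin A x⟫_ℂ :=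
    (dotProduct_comm _ _).trans (EuclideanSpace.inner_eq_star_dotProduct x (Matrix.toEuclideanLin A x)).symm
  rw [h1, ← hA.eigenvectorBasis.repr.inner_map_map x (Matrix.toEuclideanLin A x)]
  rw [PiLp.inner_apply]
  simp_rw [repr_toEuclideanLin hA x]
  rw [Complex.re_sum]
  congr 1
  funext i
  set c := hA.eigenvectorBasis.repr x i
  have : (starRingEnd ℂ) c * ((hA.eigenvalues i : ℂ) * c) =
      ((hA.eigenvalues i * ‖c‖^2 : ℝ) : ℂ) := by
    rw [mul_comm ((starRingEnd ℂ) c), mul_assoc, Complex.mul_conj']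
    push_cast
    ring
  rw [RCLike.inner_apply, mul_comm, this, Complex.ofReal_re]

lemma norm_sq_repr (u : OrthonormalBasis n ℂ (EuclideanSpace ℂ n)) (x : EuclideanSpace ℂ n) :
    ‖x‖^2 = ∑ i, ‖u.repr x i‖^2 := by
  rw [← u.repr.norm_map x]
  exact PiLp.norm_sq_eq_of_L2 _ _

lemma repr_eq_zero_of_notMem (u : OrthonormalBasis n ℂ (EuclideanSpace ℂ n)) {s : Set n}
    {x : EuclideanSpace ℂ n} (hx : x ∈ Submodule.span ℂ (u '' s)) {i : n} (hi : i ∉ s) :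
    u.repr x i = 0 := by
  rw [OrthonormalBasis.repr_apply_apply]
  induction hx using Submodule.span_induction with
  | mem y hy =>
      obtain ⟨j, hj, rfl⟩ := hy
      exact u.orthonormal.2 (fun h => hi (h ▸ hj))
  | zero => exact inner_zero_right _
  | add y z _ _ hy hz => rw [inner_add_right, hy, hz, add_zero]
  | smul a y _ hy => rw [inner_smul_right, hy, mul_zero]

lemma quad_ge {A : Matrix n n ℂ} (hA : A.IsHermitian) (c : ℝ) (s : Set n)
    (hs : ∀ i ∈ s, c ≤ hA.eigenvalues i) (x : EuclideanSpace ℂ n)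
    (hx : x ∈ Submodule.span ℂ (hA.eigenvectorBasis '' s)) :
    c * ‖x‖^2 ≤ Complex.re (dotProduct (star ((WithLp.equiv 2 (n → ℂ)) x))
      (A *ᵥ (WithLp.equiv 2 (n → ℂ)) x)) := by
  rw [quad_eq hA, norm_sq_repr hA.eigenvectorBasis, Finset.mul_sum]
  apply Finset.sum_le_sum
  intro i _
  by_cases h : hA.eigenvectorBasis.repr x i = 0
  · simp [h]
  · have hi : i ∈ s := by
      by_contra hi
      exact h (repr_eq_zero_of_notMem _ hx hi)
    exact mul_le_mul_of_nonneg_right (hs i hi) (by positivity)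

lemma quad_le {A : Matrix n n ℂ} (hA : A.IsHermitian) (c : ℝ) (s : Set n)
    (hs : ∀ i ∈ s, hA.eigenvalues i ≤ c) (x : EuclideanSpace ℂ n)
    (hx : x ∈ Submodule.span ℂ (hA.eigenvectorBasis '' s)) :
    Complex.re (dotProduct (star ((WithLp.equiv 2 (n → ℂ)) x))
      (A *ᵥ (WithLp.equiv 2 (n → ℂ)) x)) ≤ c * ‖x‖^2 := by
  rw [quad_eq hA, norm_sq_repr hA.eigenvectorBasis, Finset.mul_sum]
  apply Finset.sum_le_sum
  intro i _
  by_cases h : hA.eigenvectorBasis.repr x i = 0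
  · simp [h]
  · have hi : i ∈ s := by
      by_contra hi
      exact h (repr_eq_zero_of_notMem _ hx hi)
    exact mul_le_mul_of_nonneg_right (hs i hi) (by positivity)

lemma finrank_span_ob (u : OrthonormalBasis n ℂ (EuclideanSpace ℂ n)) (s : Finset n) :
    Module.finrank ℂ (Submodule.span ℂ (u '' (s : Set n))) = s.card := by
  have h1 : Set.range (⇑u ∘ (Subtype.val : {x // x ∈ s} → n)) = ⇑u '' (s : Set n) := by
    rw [Set.range_comp, Subtype.range_coe]
  rw [← h1, finrank_span_eq_card
    ((u.orthonormal.linearIndependent).comp (Subtype.val : {x // x ∈ s} → n)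
      Subtype.val_injective),
    Fintype.card_coe]

lemma weyl_mono {d : ℕ} {A B : Matrix (Fin d) (Fin d) ℂ} (hA : A.IsHermitian)
    (hB : B.IsHermitian) (hAB : (B - A).PosSemidef) (k : Fin d) :
    hA.eigenvalues (Tuple.sort hA.eigenvalues k) ≤
      hB.eigenvalues (Tuple.sort hB.eigenvalues k) := by
  set α := hA.eigenvalues with hα
  set β := hB.eigenvalues with hβ
  set σ := Tuple.sort α with hσ
  set τ := Tuple.sort β with hτ
  set sA : Finset (Fin d) := Finset.univ.filter (fun i => α (σ k) ≤ α i) with hsA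
  set sB : Finset (Fin d) := Finset.univ.filter (fun i => β i ≤ β (τ k)) with hsB
  have hcA : d - (k : ℕ) ≤ sA.card := by
    have hsub : (Finset.Ici k).image σ ⊆ sA := by
      intro i hi
      obtain ⟨j, hj, rfl⟩ := Finset.mem_image.1 hi
      simp only [hsA, Finset.mem_filter, Finset.mem_univ, true_and]
      exact Tuple.monotone_sort α (Finset.mem_Ici.1 hj)
    calc d - (k : ℕ) = (Finset.Ici k).card := (Fin.card_Ici k).symm
      _ = ((Finset.Ici k).image σ).card :=
          (Finset.card_image_of_injective _ σ.injective).symm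
      _ ≤ sA.card := Finset.card_le_card hsub
  have hcB : (k : ℕ) + 1 ≤ sB.card := by
    have hsub : (Finset.Iic k).image τ ⊆ sB := by
      intro i hi
      obtain ⟨j, hj, rfl⟩ := Finset.mem_image.1 hi
      simp only [hsB, Finset.mem_filter, Finset.mem_univ, true_and]
      exact Tuple.monotone_sort β (Finset.mem_Iic.1 hj)
    calc (k : ℕ) + 1 = (Finset.Iic k).card := (Fin.card_Iic k).symm
      _ = ((Finset.Iic k).image τ).card :=
          (Finset.card_image_of_injective _ τ.injective).symm
      _ ≤ sB.card := Finset.card_le_card hsub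
  set V := Submodule.span ℂ (hA.eigenvectorBasis '' (sA : Set (Fin d))) with hV
  set W := Submodule.span ℂ (hB.eigenvectorBasis '' (sB : Set (Fin d))) with hW
  have hdimV : Module.finrank ℂ V = sA.card := finrank_span_ob _ _
  have hdimW : Module.finrank ℂ W = sB.card := finrank_span_ob _ _
  have hex : ∃ x ∈ V ⊓ W, x ≠ 0 := by
    rw [← Submodule.ne_bot_iff]
    intro hbot
    have h1 := Submodule.finrank_sup_add_finrank_inf_eq V W
    rw [hbot, finrank_bot, add_zero] at h1
    have h2 : Module.finrank ℂ ↥(V ⊔ W) ≤ d := by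
      have h3 := Submodule.finrank_le (V ⊔ W)
      rwa [finrank_euclideanSpace_fin] at h3
    have hk := k.isLt
    omega
  obtain ⟨x, hxmem, hx0⟩ := hex
  have h1 : α (σ k) * ‖x‖^2 ≤ Complex.re (dotProduct
      (star ((WithLp.equiv 2 (Fin d → ℂ)) x)) (A *ᵥ (WithLp.equiv 2 (Fin d → ℂ)) x)) := by
    apply quad_ge hA _ _ ?_ x hxmem.1
    intro i hi
    simp only [hsA, Finset.coe_filter, Set.mem_setOf_eq, Finset.mem_univ, true_and] at hi
    exact hi
  have h2 : Complex.re (dotProduct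
      (star ((WithLp.equiv 2 (Fin d → ℂ)) x)) (B *ᵥ (WithLp.equiv 2 (Fin d → ℂ)) x))
      ≤ β (τ k) * ‖x‖^2 := by
    apply quad_le hB _ _ ?_ x hxmem.2
    intro i hi
    simp only [hsB, Finset.coe_filter, Set.mem_setOf_eq, Finset.mem_univ, true_and] at hi
    exact hi
  have h3 : Complex.re (dotProduct
      (star ((WithLp.equiv 2 (Fin d → ℂ)) x)) (A *ᵥ (WithLp.equiv 2 (Fin d → ℂ)) x))
      ≤ Complex.re (dotProduct
      (star ((WithLp.equiv 2 (Fin d → ℂ)) x)) (B *ᵥ (WithLp.equiv 2 (Fin d → ℂ)) x)) := by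
    have h4 := hAB.dotProduct_mulVec_nonneg ((WithLp.equiv 2 (Fin d → ℂ)) x)
    have h5 : 0 ≤ (dotProduct (star ((WithLp.equiv 2 (Fin d → ℂ)) x))
        ((B - A) *ᵥ ((WithLp.equiv 2 (Fin d → ℂ)) x))).re := by
      rw [Complex.le_def] at h4
      simpa using h4.1
    rw [Matrix.sub_mulVec, dotProduct_sub, Complex.sub_re] at h5
    linarith
  have hxn : (0:ℝ) < ‖x‖^2 := by
    have := norm_pos_iff.2 hx0
    positivity
  have := h1.trans (h3.trans h2)
  exact le_of_mul_le_mul_right this hxn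

end MatrixLemmas

/-- Fannes inequality. For density matrices ρ₁, ρ₂ on ℂ^d with
`‖ρ₁ − ρ₂‖₁ = ε ≤ 1/e`, we have `|S(ρ₁) − S(ρ₂)| ≤ ε·log₂ d + η(ε)`, where
`S(ρ) = −∑ᵢ λᵢ·log₂ λᵢ` (von Neumann entropy expressed via the eigenvalues of ρ)
and `η(x) = −x·log₂ x`. -/
theorem fannes_inequality (d : ℕ) (hd : 1 ≤ d)
    (ρ₁ ρ₂ : Matrix (Fin d) (Fin d) ℂ)
    (h₁ : ρ₁.PosSemidef) (htr₁ : ρ₁.trace = 1)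
    (h₂ : ρ₂.PosSemidef) (htr₂ : ρ₂.trace = 1)
    (ε : ℝ) (hε : ε = traceNorm (ρ₁ - ρ₂)) (hε' : ε ≤ (Real.exp 1)⁻¹) :
    |(-∑ i, h₁.1.eigenvalues i * Real.logb 2 (h₁.1.eigenvalues i))
      - (-∑ i, h₂.1.eigenvalues i * Real.logb 2 (h₂.1.eigenvalues i))|
    ≤ ε * Real.logb 2 d + (-ε * Real.logb 2 ε) := by
  classical
  have hΔ : (ρ₁ - ρ₂).IsHermitian := h₁.1.sub h₂.1
  set μ : Fin d → ℝ := hΔ.eigenvalues with hμdef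
  set U := hΔ.eigenvectorUnitary with hUdef
  have hε0 : ε = ∑ i, |μ i| := by rw [hε, traceNorm_eq_sum_abs hΔ]
  have hεnn : 0 ≤ ε := hε0 ▸ Finset.sum_nonneg (fun i _ => abs_nonneg _)
  have htrΔ : (ρ₁ - ρ₂).trace = 0 := by rw [Matrix.trace_sub, htr₁, htr₂, sub_self]
  have hsumμ : ∑ i, μ i = 0 := by
    have h0 := IsHermitian.trace_eq' hΔ
    rw [htrΔ] at h0
    have h2 : ((∑ i, μ i : ℝ) : ℂ) = 0 := by push_cast; rw [← h0]
    exact_mod_cast h2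
  set Q : Matrix (Fin d) (Fin d) ℂ :=
    (U : Matrix (Fin d) (Fin d) ℂ) * Matrix.diagonal (fun i => ((max (μ i) 0 : ℝ) : ℂ)) *
      star (U : Matrix (Fin d) (Fin d) ℂ) with hQdef
  set S : Matrix (Fin d) (Fin d) ℂ :=
    (U : Matrix (Fin d) (Fin d) ℂ) * Matrix.diagonal (fun i => ((max (-μ i) 0 : ℝ) : ℂ)) *
      star (U : Matrix (Fin d) (Fin d) ℂ) with hSdef
  have hQpsd : Q.PosSemidef := psd_conj_diag U _ (fun i => le_max_right _ _)
  have hSpsd : S.PosSemidef := psd_conj_diag U _ (fun i => le_max_right _ _)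
  have hQS : Q - S = ρ₁ - ρ₂ := by
    rw [hQdef, hSdef, ← sub_mul, ← mul_sub, Matrix.diagonal_sub]
    have hfun : (fun i => ((max (μ i) 0 : ℝ) : ℂ) - ((max (-μ i) 0 : ℝ) : ℂ)) =
        (RCLike.ofReal ∘ μ : Fin d → ℂ) := by
      funext i
      rw [← Complex.ofReal_sub, max_zero_sub_max_neg_zero_eq_self]
      rfl
    rw [hfun]
    conv_rhs => rw [hΔ.spectral_theorem, Unitary.conjStarAlgAut_apply]
  set V := ρ₂ + Q with hVdef
  have hV : V.IsHermitian := h₂.1.add hQpsd.1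
  have hV1 : (V - ρ₁).PosSemidef := by
    have hVS : V - ρ₁ = S := by
      calc V - ρ₁ = Q - (ρ₁ - ρ₂) := by rw [hVdef]; abel
        _ = Q - (Q - S) := by rw [hQS]
        _ = S := by abel
    rw [hVS]; exact hSpsd
  have hV2 : (V - ρ₂).PosSemidef := by
    have hVQ : V - ρ₂ = Q := by rw [hVdef]; abel
    rw [hVQ]; exact hQpsd
  set r : Fin d → ℝ := h₁.1.eigenvalues with hrdef
  set s : Fin d → ℝ := h₂.1.eigenvalues with hsdef
  set v : Fin d → ℝ := hV.eigenvalues with hvdef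
  set σ₁ := Tuple.sort r with hσ₁
  set σ₂ := Tuple.sort s with hσ₂
  set σ₃ := Tuple.sort v with hσ₃
  have hw1 : ∀ k, r (σ₁ k) ≤ v (σ₃ k) := fun k => weyl_mono h₁.1 hV hV1 k
  have hw2 : ∀ k, s (σ₂ k) ≤ v (σ₃ k) := fun k => weyl_mono h₂.1 hV hV2 k
  have hsum_r : ∑ k, r k = 1 := by
    have h0 := IsHermitian.trace_eq' h₁.1
    rw [htr₁] at h0
    have h2 : ((∑ k, r k : ℝ) : ℂ) = 1 := by push_cast; rw [← h0]
    exact_mod_cast h2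
  have hsum_s : ∑ k, s k = 1 := by
    have h0 := IsHermitian.trace_eq' h₂.1
    rw [htr₂] at h0
    have h2 : ((∑ k, s k : ℝ) : ℂ) = 1 := by push_cast; rw [← h0]
    exact_mod_cast h2
  have hmax : ∀ x : ℝ, max x 0 = (x + |x|) / 2 := by
    intro x
    rcases le_total x 0 with h | h
    · rw [max_eq_right h, abs_of_nonpos h]; ring
    · rw [max_eq_left h, abs_of_nonneg h]; ring
  have hsum_v : ∑ k, v k = 1 + ε / 2 := by
    have hQtr : Q.trace = ((ε / 2 : ℝ) : ℂ) := by
      rw [hQdef, trace_conj_diag]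
      rw [← Complex.ofReal_sum]
      congr 1
      rw [Finset.sum_congr rfl (fun i _ => hmax (μ i)), ← Finset.sum_div,
        Finset.sum_add_distrib, hsumμ, zero_add, ← hε0]
    have ht : V.trace = ((1 + ε / 2 : ℝ) : ℂ) := by
      rw [hVdef, Matrix.trace_add, htr₂, hQtr]
      push_cast
      ring
    have h0 := IsHermitian.trace_eq' hV
    rw [ht] at h0
    have h2 : ((∑ k, v k : ℝ) : ℂ) = ((1 + ε / 2 : ℝ) : ℂ) := by push_cast; rw [← h0]; push_cast; ring
    exact_mod_cast h2
  have hr0 : ∀ k, 0 ≤ r k := fun k => h₁.eigenvalues_nonneg k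
  have hs0 : ∀ k, 0 ≤ s k := fun k => h₂.eigenvalues_nonneg k
  have hr1 : ∀ k, r k ≤ 1 := fun k => by
    rw [← hsum_r]; exact Finset.single_le_sum (fun i _ => hr0 i) (Finset.mem_univ k)
  have hs1 : ∀ k, s k ≤ 1 := fun k => by
    rw [← hsum_s]; exact Finset.single_le_sum (fun i _ => hs0 i) (Finset.mem_univ k)
  set a : Fin d → ℝ := fun k => r (σ₁ k) with hadef
  set b : Fin d → ℝ := fun k => s (σ₂ k) with hbdef
  set t : Fin d → ℝ := fun k => |a k - b k| with htdef
  have habs : ∀ x y : ℝ, |x - y| = 2 * max x y - x - y := by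
    intro x y
    rcases le_total x y with h | h
    · rw [abs_of_nonpos (by linarith), max_eq_right h]; ring
    · rw [abs_of_nonneg (by linarith), max_eq_left h]; ring
  have hsum_a : ∑ k, a k = 1 := by rw [hadef, Equiv.sum_comp σ₁ r, hsum_r]
  have hsum_b : ∑ k, b k = 1 := by rw [hbdef, Equiv.sum_comp σ₂ s, hsum_s]
  have hL : ∑ k, t k ≤ ε := by
    have h2 : ∀ k, max (a k) (b k) ≤ v (σ₃ k) := fun k => max_le (hw1 k) (hw2 k)
    calc ∑ k, t k = 2 * (∑ k, max (a k) (b k)) - (∑ k, a k) - (∑ k, b k) := by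
          rw [Finset.sum_congr rfl (fun k _ => habs (a k) (b k)),
            Finset.sum_sub_distrib, Finset.sum_sub_distrib, Finset.mul_sum]
      _ ≤ 2 * (∑ k, v (σ₃ k)) - 1 - 1 := by
          have h3 := Finset.sum_le_sum (fun k (_ : k ∈ Finset.univ) => h2 k)
          rw [hsum_a, hsum_b]
          linarith
      _ = ε := by rw [Equiv.sum_comp σ₃ v, hsum_v]; ring
  have ht0 : ∀ k, 0 ≤ t k := fun k => abs_nonneg _
  have htk : ∀ k, t k ≤ ε := fun k =>
    le_trans (Finset.single_le_sum (fun i _ => ht0 i) (Finset.mem_univ k)) hL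
  have hmain : |(∑ k, Real.negMulLog (r k)) - ∑ k, Real.negMulLog (s k)| ≤
      ε * Real.log d + Real.negMulLog ε := by
    have e1 : ∑ k, Real.negMulLog (r k) = ∑ k, Real.negMulLog (a k) :=
      (Equiv.sum_comp σ₁ (fun k => Real.negMulLog (r k))).symm
    have e2 : ∑ k, Real.negMulLog (s k) = ∑ k, Real.negMulLog (b k) :=
      (Equiv.sum_comp σ₂ (fun k => Real.negMulLog (s k))).symm
    calc |(∑ k, Real.negMulLog (r k)) - ∑ k, Real.negMulLog (s k)|
        = |∑ k, (Real.negMulLog (a k) - Real.negMulLog (b k))| := by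
          rw [e1, e2, ← Finset.sum_sub_distrib]
      _ ≤ ∑ k, |Real.negMulLog (a k) - Real.negMulLog (b k)| :=
          Finset.abs_sum_le_sum_abs _ _
      _ ≤ ∑ k, Real.negMulLog (t k) := by
          apply Finset.sum_le_sum
          intro k _
          exact eta_abs_sub (hr0 _) (hr1 _) (hs0 _) (hs1 _) (le_trans (htk k) hε')
      _ ≤ (∑ k, t k) * Real.log d + Real.negMulLog (∑ k, t k) := eta_sum_le hd t ht0
      _ ≤ ε * Real.log d + Real.negMulLog ε := by
          have hlogd : (0:ℝ) ≤ Real.log d := Real.log_nonneg (by exact_mod_cast hd)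
          have hm := eta_mono (Finset.sum_nonneg fun k _ => ht0 k) hL hε'
          have hm2 := mul_le_mul_of_nonneg_right hL hlogd
          linarith
  have hlog2 : (0:ℝ) < Real.log 2 := Real.log_pos one_lt_two
  have hconv : ∀ (f : Fin d → ℝ), (-∑ i, f i * Real.logb 2 (f i)) =
      (∑ i, Real.negMulLog (f i)) / Real.log 2 := by
    intro f
    rw [Finset.sum_div, ← Finset.sum_neg_distrib]
    congr 1
    funext i
    rw [Real.logb, Real.negMulLog]
    ring
  rw [hconv r, hconv s, div_sub_div_same]
  have hrhs : ε * Real.logb 2 d + (-ε * Real.logb 2 ε) =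
      (ε * Real.log d + Real.negMulLog ε) / Real.log 2 := by
    rw [Real.logb, Real.logb, Real.negMulLog]
    ring
  rw [hrhs, abs_div, abs_of_pos hlog2]
  exact (div_le_div_iff_of_pos_right hlog2).2 hmain
end
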